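/- arXiv:math/0003165 — 2 statements merged into one kernel-verified Lean document; each statement's English description precedes it below -/
import Mathlib

section
/- Let (r_n)_{n∈ω} be a sequence of elements of R such that r_n ≠ 0 for infinitely many n. Then there exist ε_n ∈ {0,1} (n ∈ ω) such that the sum Σ_{n∈ω} r_n q_n ε_n lies in the S-adic completion R̂ of R but not in R; equivalently, there exist ε_n ∈ {0,1} such that no element r ∈ R satisfies r ≡ Σ_{n<m} r_n q_n ε_n (mod q_m R) for every m ∈ ω. -/
/-- **Observation 1.2** (Göbel–Shelah, "Decompositions of Reflexive Modules").
If `r n ≠ 0` infinitely often, then there are `ε n ∈ {0,1}` such that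
`Σ_{n} r n * q n * ε n` lies in the `S`-adic completion of `R` but not in `R`;
equivalently, no element `x ∈ R` is congruent to all the partial sums
`Σ_{n<m} r n * q n * ε n` modulo `q m R`. -/
theorem observation_sum_in_completion_not_in_R
    {R : Type} [CommRing R] [IsDomain R] [IsPrincipalIdealRing R] [Countable R]
    (hRf : ¬ IsField R)
    (s : ℕ → R) (hs0 : s 0 = 1) (hsne : ∀ n, s n ≠ 0)
    (hmul : ∀ m n, ∃ k, s m * s n = s k)
    (q : ℕ → R) (hq : ∀ n, q n = ∏ i ∈ Finset.range n, s i)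
    (hsep : ∀ x : R, (∀ n, x ∈ Ideal.span {q n}) → x = 0)
    (r : ℕ → R) (hr : {n : ℕ | r n ≠ 0}.Infinite) :
    ∃ ε : ℕ → R, (∀ n, ε n = 0 ∨ ε n = 1) ∧
      ¬ ∃ x : R, ∀ m : ℕ,
        x - ∑ n ∈ Finset.range m, r n * q n * ε n ∈ Ideal.span {q m} := by
  classical
  have hqne : ∀ n, q n ≠ 0 := by
    intro n
    rw [hq]
    exact Finset.prod_ne_zero_iff.2 fun i _ => hsne i
  have hanti : ∀ {m m' : ℕ}, m ≤ m' → Ideal.span {q m'} ≤ Ideal.span {q m} := by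
    intro m m' h
    rw [Ideal.span_singleton_le_span_singleton, hq, hq]
    exact Finset.prod_dvd_prod_of_subset _ _ _ (Finset.range_subset_range.2 h)
  have hbig : ∀ (y : R), y ≠ 0 → ∀ N₀ : ℕ, ∃ m, N₀ < m ∧ y ∉ Ideal.span {q m} := by
    intro y hy N₀
    by_contra h
    push_neg at h
    apply hy
    apply hsep
    intro n
    exact hanti (le_max_left n (N₀ + 1))
      (h _ (lt_of_lt_of_le (Nat.lt_succ_self _) (le_max_right _ _)))
  -- the diagonal step
  have hstep : ∀ (N : ℕ) (ε : ℕ → R) (x : R),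
      (∀ i, N ≤ i → ε i = 0) → (∀ i, ε i = 0 ∨ ε i = 1) →
      ∃ (N' : ℕ) (ε' : ℕ → R), N < N' ∧ (∀ i, N' ≤ i → ε' i = 0) ∧
        (∀ i, ε' i = 0 ∨ ε' i = 1) ∧ (∀ i, i < N → ε' i = ε i) ∧
        x - ∑ i ∈ Finset.range N', r i * q i * ε' i ∉ Ideal.span {q N'} := by
    intro N ε x h0 h01
    set σ := ∑ i ∈ Finset.range N, r i * q i * ε i with hσ
    by_cases hx : x - σ = 0
    · -- x = σ : flip one bit at some n with r n ≠ 0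
      obtain ⟨n, hn, hNn⟩ := hr.exists_gt N
      have hy : r n * q n ≠ 0 := mul_ne_zero hn (hqne n)
      obtain ⟨m, hnm, hym⟩ := hbig _ hy n
      refine ⟨m, Function.update ε n 1, lt_trans hNn hnm, ?_, ?_, ?_, ?_⟩
      · intro i hi
        rw [Function.update_of_ne (by omega)]
        exact h0 i (by omega)
      · intro i
        by_cases hin : i = n
        · subst hin; rw [Function.update_self]; exact Or.inr rfl
        · rw [Function.update_of_ne hin]; exact h01 i
      · intro i hi
        rw [Function.update_of_ne (by omega)]
      · have hnmem : n ∈ Finset.range m := Finset.mem_range.2 hnm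
        have hsum : ∑ i ∈ Finset.range m, r i * q i * Function.update ε n 1 i
            = σ + r n * q n := by
          rw [← Finset.sum_erase_add _ _ hnmem]
          congr 1
          · rw [Finset.sum_congr rfl
              (fun i hi => by rw [Function.update_of_ne (Finset.mem_erase.1 hi).1]), hσ]
            symm
            apply Finset.sum_subset
            · intro i hi
              simp only [Finset.mem_range, Finset.mem_erase] at *
              omega
            · intro i hi hni
              simp only [Finset.mem_range] at hni
              rw [h0 i (by omega)]
              ring
          · rw [Function.update_self, mul_one]
        rw [hsum]
        intro hmem
        apply hym
        have : -(r n * q n) ∈ Ideal.span {q m} := by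
          have : x - (σ + r n * q n) = -(r n * q n) := by
            rw [sub_add_eq_sub_sub, hx]; ring
          rwa [this] at hmem
        simpa using (Ideal.span {q m}).neg_mem this
    · -- x ≠ σ : leave ε unchanged
      obtain ⟨m, hNm, hxm⟩ := hbig _ hx N
      refine ⟨m, ε, hNm, fun i hi => h0 i (by omega), h01, fun i _ => rfl, ?_⟩
      have hsum : ∑ i ∈ Finset.range m, r i * q i * ε i = σ := by
        rw [hσ]
        symm
        apply Finset.sum_subset (Finset.range_subset_range.2 (le_of_lt hNm))
        intro i _ hni
        simp only [Finset.mem_range] at hni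
        rw [h0 i (by omega)]
        ring
      rwa [hsum]
  choose N' E' hlt hz h01' hag hkill using hstep
  obtain ⟨e, he⟩ := exists_surjective_nat R
  -- the recursive construction, carrying the invariant in a subtype
  let T := {p : ℕ × (ℕ → R) // (∀ i, p.1 ≤ i → p.2 i = 0) ∧ (∀ i, p.2 i = 0 ∨ p.2 i = 1)}
  let step : ℕ → T → T := fun k p =>
    ⟨⟨N' p.1.1 p.1.2 (e k) p.2.1 p.2.2, E' p.1.1 p.1.2 (e k) p.2.1 p.2.2⟩,
      hz _ _ _ _ _, h01' _ _ _ _ _⟩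
  let g : ℕ → T := fun k => Nat.rec ⟨⟨0, fun _ => 0⟩, fun _ _ => rfl, fun _ => Or.inl rfl⟩ step k
  have hgsucc : ∀ k, g (k + 1) = step k (g k) := fun k => rfl
  have hNlt : ∀ k, (g k).1.1 < (g (k + 1)).1.1 := by
    intro k
    rw [hgsucc]
    exact hlt _ _ _ _ _
  have hNmono : ∀ {k k' : ℕ}, k ≤ k' → (g k).1.1 ≤ (g k').1.1 := by
    intro k k' h
    induction h with
    | refl => exact le_refl _
    | step h ih => exact le_trans ih (le_of_lt (hNlt _))
  have hkN : ∀ k, k ≤ (g k).1.1 := by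
    intro k
    induction k with
    | zero => exact Nat.zero_le _
    | succ k ih => exact Nat.succ_le_of_lt (lt_of_le_of_lt ih (hNlt k))
  have hag1 : ∀ k i, i < (g k).1.1 → (g (k + 1)).1.2 i = (g k).1.2 i := by
    intro k i hi
    rw [hgsucc]
    exact hag _ _ _ _ _ i hi
  have hagmany : ∀ k k', k ≤ k' → ∀ i, i < (g k).1.1 → (g k').1.2 i = (g k).1.2 i := by
    intro k k' h
    induction h with
    | refl => intro i _; rfl
    | @step k'' h ih =>
        intro i hi
        rw [hag1 k'' i (lt_of_lt_of_le hi (hNmono h))]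
        exact ih i hi
  set ε : ℕ → R := fun i => (g (i + 1)).1.2 i with hε
  have hεeq : ∀ k i, i < (g k).1.1 → ε i = (g k).1.2 i := by
    intro k i hi
    have h1 : (g (max k (i + 1))).1.2 i = (g (i + 1)).1.2 i :=
      hagmany _ _ (le_max_right _ _) i (lt_of_lt_of_le (Nat.lt_succ_self i) (hkN (i + 1)))
    have h2 : (g (max k (i + 1))).1.2 i = (g k).1.2 i :=
      hagmany _ _ (le_max_left _ _) i hi
    have h3 : ε i = (g (i + 1)).1.2 i := rfl
    rw [h3, ← h1, h2]
  refine ⟨ε, fun n => (g (n + 1)).2.2 n, ?_⟩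
  rintro ⟨x, hx⟩
  obtain ⟨k, hk⟩ := he x
  have hkill' : e k - ∑ i ∈ Finset.range (g (k + 1)).1.1, r i * q i * (g (k + 1)).1.2 i
      ∉ Ideal.span {q (g (k + 1)).1.1} := by
    rw [hgsucc]
    exact hkill _ _ _ _ _
  apply hkill'
  rw [hk]
  have : ∑ i ∈ Finset.range (g (k + 1)).1.1, r i * q i * (g (k + 1)).1.2 i
      = ∑ i ∈ Finset.range (g (k + 1)).1.1, r i * q i * ε i := by
    apply Finset.sum_congr rfl
    intro i hi
    rw [hεeq (k + 1) i (Finset.mem_range.1 hi)]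
  rw [this]
  exact hx _
end

section
/- Assume CH. Let G be an R-module of cardinality ℵ₁ with an ℵ₁-filtration G = ⋃_{α<ω₁} G_α, and let E ⊆ ω₁ be a stationary subset of ω₁. Then there is a family of functions {φ_α : G_α → G_α : α ∈ E} such that for every function φ : G → G and every countable subset A of G there is an ordinal β ∈ E (in fact an unbounded set of such ordinals β ∈ E) with φ ↾ A = φ_β ↾ (G_β ∩ A); in particular A ⊆ G_β. -/
open Cardinal

universe u v


/-- The first uncountable ordinal `ω₁`. -/
noncomputable def omega1 : Ordinal := (Cardinal.aleph 1).ord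

/-- `C` is a closed unbounded (club) subset of `ω₁`. -/
noncomputable def IsClubBelowOmega1 (C : Set Ordinal) : Prop :=
  C ⊆ Set.Iio omega1 ∧
  (∀ α < omega1, ∃ β ∈ C, α < β) ∧
  (∀ α, α < omega1 → α ≠ 0 → (∀ β < α, ∃ γ ∈ C, β < γ ∧ γ < α) → α ∈ C)

/-- `E` is a stationary subset of `ω₁`: it meets every club. -/
noncomputable def IsStationaryInOmega1 (E : Set Ordinal) : Prop :=
  E ⊆ Set.Iio omega1 ∧ ∀ C : Set Ordinal, IsClubBelowOmega1 C → (E ∩ C).Nonempty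

lemma omega1_isLimit : Order.IsSuccLimit omega1.{u} := Cardinal.isSuccLimit_ord (Cardinal.aleph0_le_aleph 1)

lemma omega1_pos : 0 < omega1.{u} := omega1_isLimit.pos

lemma cof_omega1 : omega1.{u}.cof = Cardinal.aleph 1 :=
  Cardinal.isRegular_aleph_one.cof_eq

lemma aleph1_lift : Cardinal.lift.{v} (Cardinal.aleph 1) = Cardinal.aleph 1 := by
  rw [Cardinal.lift_aleph, Ordinal.lift_one]

lemma ch_down (h : (2 : Cardinal.{v}) ^ Cardinal.aleph0 = Cardinal.aleph 1) :
    (2 : Cardinal.{0}) ^ Cardinal.aleph0 = Cardinal.aleph 1 := by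
  apply Cardinal.lift_injective.{v, 0}
  rw [Cardinal.lift_power, Cardinal.lift_two, Cardinal.lift_aleph0, aleph1_lift, h]

lemma bdd_of_countable (S : Set Ordinal.{u}) (hS : S.Countable)
    (h : ∀ x ∈ S, x < omega1) : ∃ δ < omega1.{u}, ∀ x ∈ S, x < δ := by
  rcases S.eq_empty_or_nonempty with rfl | hne
  · exact ⟨0, omega1_pos, by simp⟩
  obtain ⟨g, rfl⟩ := Set.Countable.exists_eq_range hS hne
  have h1 : Cardinal.lift.{u, 0} #ℕ < omega1.{u}.cof := by
    rw [cof_omega1, Cardinal.mk_nat, Cardinal.lift_aleph0]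
    exact Cardinal.aleph0_lt_aleph_one
  have hsup : iSup g < omega1.{u} :=
    Ordinal.iSup_lt_ord_lift (f := g) (c := omega1.{u}) h1 (fun n => h (g n) ⟨n, rfl⟩)
  refine ⟨Order.succ (iSup g), omega1_isLimit.succ_lt hsup, ?_⟩
  rintro x ⟨n, rfl⟩
  exact Order.lt_succ_iff.2 (Ordinal.le_iSup g n)

lemma club_Ioo (γ : Ordinal.{u}) (hγ : γ < omega1) :
    IsClubBelowOmega1 (Set.Ioo γ omega1) := by
  refine ⟨fun x hx => hx.2, fun α hα => ?_, fun α hα hα0 hcl => ?_⟩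
  · have hmax : max α γ < omega1 := max_lt hα hγ
    have hsucc : Order.succ (max α γ) < omega1 := omega1_isLimit.succ_lt hmax
    exact ⟨Order.succ (max α γ),
      ⟨lt_of_le_of_lt (le_max_right α γ) (Order.lt_succ _), hsucc⟩,
      lt_of_le_of_lt (le_max_left α γ) (Order.lt_succ _)⟩
  · obtain ⟨γ', hγ'C, _, hγ'α⟩ := hcl 0 (pos_iff_ne_zero.2 hα0)
    exact ⟨lt_trans hγ'C.1 hγ'α, hα⟩

lemma E_unbounded (E : Set Ordinal.{u}) (hE : IsStationaryInOmega1 E) :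
    ∀ γ < omega1.{u}, ∃ β ∈ E, γ < β := by
  intro γ hγ
  obtain ⟨β, hβE, hβ⟩ := hE.2 _ (club_Ioo γ hγ)
  exact ⟨β, hβE, hβ.1⟩

open Classical in
/-- decoding function used for the prediction family -/
noncomputable def decFun {G : Type} [Zero G] (u : ℕ → G × G) (S : Set G) : G → G :=
  fun x => if h : ∃ n, (u n).1 = x ∧ (u n).2 ∈ S then (u h.choose).2 else 0

lemma decFun_mem {G : Type} [Zero G] (u : ℕ → G × G) (S : Set G) (hS : (0 : G) ∈ S)
    (x : G) : decFun u S x ∈ S := by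
  unfold decFun
  split
  · next h => exact h.choose_spec.2
  · exact hS

lemma decFun_eq {G : Type} [Zero G] (u : ℕ → G × G) (S : Set G) (x : G) (φ : G → G)
    (hfun : ∀ n, (u n).2 = φ (u n).1)
    (hex : ∃ n, (u n).1 = x ∧ (u n).2 ∈ S) : decFun u S x = φ x := by
  unfold decFun
  rw [dif_pos hex, hfun hex.choose, hex.choose_spec.1]

theorem main_aux {R : Type} [CommRing R] {G : Type} [AddCommGroup G] [Module R G]
    (hCH0 : (2 : Cardinal.{0}) ^ Cardinal.aleph0 = Cardinal.aleph 1)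
    (hGcard : Cardinal.mk G = Cardinal.aleph 1)
    (Gfil : Ordinal.{u} → Submodule R G)
    (hmono : ∀ α β : Ordinal.{u}, α ≤ β → β < omega1 → Gfil α ≤ Gfil β)
    (hunion : (⨆ (α : Ordinal.{u}) (_ : α < omega1), Gfil α) = ⊤)
    (E : Set Ordinal.{u}) (hE : IsStationaryInOmega1 E) :
    ∃ f : Ordinal.{u} → G → G,
      (∀ β ∈ E, ∀ x ∈ Gfil β, f β x ∈ Gfil β) ∧
      ∀ (φ : G → G) (A : Set G), A.Countable →
        ∀ γ < omega1.{u}, ∃ β ∈ E, γ < β ∧ A ⊆ (Gfil β : Set G) ∧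
          ∀ a ∈ A, φ a = f β a := by
  classical
  -- cardinal arithmetic
  have hGG : #(G × G) = Cardinal.aleph 1 := by
    rw [Cardinal.mk_prod, Cardinal.lift_id, hGcard,
      Cardinal.mul_eq_self (Cardinal.aleph0_le_aleph 1)]
  have hU : #(ℕ → G × G) = Cardinal.aleph 1 := by
    rw [← Cardinal.power_def, hGG, Cardinal.mk_nat]
    calc (Cardinal.aleph 1) ^ Cardinal.aleph0
        = (2 ^ Cardinal.aleph0) ^ Cardinal.aleph0 := by rw [hCH0]
      _ = 2 ^ (Cardinal.aleph0 * Cardinal.aleph0) := by rw [← Cardinal.power_mul]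
      _ = 2 ^ Cardinal.aleph0 := by rw [Cardinal.aleph0_mul_aleph0]
      _ = Cardinal.aleph 1 := hCH0
  set I : Set.Iio omega1.{u} ≃o omega1.{u}.ToType := Ordinal.ToType.mk (o := omega1)
  set E' : Set omega1.{u}.ToType := {s | (I.symm s : Ordinal) ∈ E} with hE'def
  have hO : #(omega1.{u}.ToType) = Cardinal.aleph 1 := Cardinal.mk_ord_toType _
  have hEunb : ∀ γ < omega1.{u}, ∃ β ∈ E, γ < β := E_unbounded E hE
  have hEnc : ¬ E.Countable := by
    intro hc
    obtain ⟨δ, hδ, hb⟩ := bdd_of_countable E hc (fun x hx => hE.1 hx)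
    obtain ⟨β, hβE, hβ⟩ := hEunb δ hδ
    exact lt_asymm hβ (hb β hβE)
  have hE'nc : ¬ E'.Countable := by
    intro hc
    apply hEnc
    have hEeq : E = (fun s : omega1.{u}.ToType => (I.symm s : Ordinal)) '' E' := by
      ext x
      constructor
      · intro hx
        have hxlt : x < omega1 := hE.1 hx
        refine ⟨I ⟨x, hxlt⟩, ?_, ?_⟩
        · show ((I.symm (I ⟨x, hxlt⟩)) : Ordinal) ∈ E
          simpa using hx
        · simp
      · rintro ⟨s, hs, rfl⟩
        exact hs
    rw [hEeq]
    exact hc.image _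
  have hE'card : #(↥E') = Cardinal.aleph 1 := by
    refine le_antisymm ((Cardinal.mk_set_le E').trans_eq hO) ?_
    by_contra hlt
    push_neg at hlt
    exact hE'nc ((Cardinal.countable_iff_lt_aleph_one E').mpr hlt)
  have hprod : #(↥E') = #(omega1.{u}.ToType × ULift.{u} (ℕ → G × G)) := by
    rw [hE'card]
    simp only [Cardinal.mk_prod, Cardinal.mk_uLift, hO, hU, aleph1_lift, Cardinal.lift_id]
    exact (Cardinal.mul_eq_self (Cardinal.aleph0_le_aleph 1)).symm
  obtain ⟨e⟩ := Cardinal.eq.mp hprod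
  -- the prediction family
  let g : ↥E' → G → G := fun x => decFun ((e x).2).down (Gfil ((I.symm (x : omega1.{u}.ToType)) : Ordinal))
  let f : Ordinal.{u} → G → G := fun β =>
    if h : ∃ x : ↥E', ((I.symm (x : omega1.{u}.ToType)) : Ordinal) = β then g h.choose
    else fun _ => 0
  have hford : ∀ (x : ↥E'), f ((I.symm (x : omega1.{u}.ToType)) : Ordinal) = g x := by
    intro x
    have hex : ∃ y : ↥E', ((I.symm (y : omega1.{u}.ToType)) : Ordinal)
        = ((I.symm (x : omega1.{u}.ToType)) : Ordinal) := ⟨x, rfl⟩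
    have hxy : hex.choose = x := by
      have h1 := hex.choose_spec
      have h2 : I.symm (hex.choose : omega1.{u}.ToType) = I.symm (x : omega1.{u}.ToType) :=
        Subtype.ext h1
      have h3 : (hex.choose : omega1.{u}.ToType) = (x : omega1.{u}.ToType) :=
        I.symm.injective h2
      exact Subtype.ext h3
    unfold f
    beta_reduce
    rw [dif_pos hex, hxy]
  refine ⟨f, ?_, ?_⟩
  · -- membership
    intro β hβE x hx
    unfold f
    beta_reduce
    split
    · next h =>
      have hβ : ((I.symm ((h.choose : ↥E') : omega1.{u}.ToType)) : Ordinal) = β := h.choose_spec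
      unfold g
      beta_reduce
      rw [hβ]
      exact decFun_mem _ _ (Submodule.zero_mem _) x
    · exact Submodule.zero_mem _
  · -- prediction
    intro φ A hA γ hγ
    -- every element lies in some Gfil α, α < ω₁
    have hxex : ∀ y : G, ∃ α, α < omega1.{u} ∧ y ∈ Gfil α := by
      intro y
      have hy : y ∈ (⨆ (α : Ordinal.{u}) (_ : α < omega1), Gfil α) := by
        rw [hunion]; exact Submodule.mem_top
      rw [iSup_subtype'] at hy
      have hne : Nonempty {α : Ordinal.{u} // α < omega1} := ⟨⟨0, omega1_pos⟩⟩
      have hdir : Directed (· ≤ ·) (fun p : {α : Ordinal.{u} // α < omega1} => Gfil p.1) := by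
        intro i j
        have hm : max i.1 j.1 < omega1 := max_lt i.2 j.2
        exact ⟨⟨max i.1 j.1, hm⟩, hmono _ _ (le_max_left _ _) hm,
          hmono _ _ (le_max_right _ _) hm⟩
      rw [Submodule.mem_iSup_of_directed _ hdir] at hy
      obtain ⟨⟨α, hα⟩, hyα⟩ := hy
      exact ⟨α, hα, hyα⟩
    choose αo hαo1 hαo2 using hxex
    obtain ⟨δ0, hδ0, hδ0b⟩ := bdd_of_countable (αo '' (A ∪ φ '' A))
      ((hA.union (hA.image φ)).image αo)
      (by rintro x ⟨y, _, rfl⟩; exact hαo1 y)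
    have hAG : ∀ y ∈ A ∪ φ '' A, y ∈ Gfil δ0 := fun y hy =>
      hmono (αo y) δ0 (le_of_lt (hδ0b _ (Set.mem_image_of_mem _ hy))) hδ0 (hαo2 y)
    rcases A.eq_empty_or_nonempty with rfl | hAne
    · obtain ⟨β, hβE, hβγ⟩ := hEunb γ hγ
      exact ⟨β, hβE, hβγ, by simp, by simp⟩
    obtain ⟨aenum, hAeq⟩ := Set.Countable.exists_eq_range hA hAne
    set uc : ℕ → G × G := fun n => (aenum n, φ (aenum n)) with hucdef
    set m : Ordinal.{u} := max γ δ0 with hmdef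
    have hm1 : m < omega1 := max_lt hγ hδ0
    -- find a fiber element above m
    have key : ∃ x : ↥E', (e x).2 = ULift.up uc ∧
        m < ((I.symm (x : omega1.{u}.ToType)) : Ordinal) := by
      by_contra hcon
      push_neg at hcon
      have hsm : Order.succ m < omega1 := omega1_isLimit.succ_lt hm1
      let K : omega1.{u}.ToType → (Order.succ m).ToType := fun t =>
        Ordinal.ToType.mk (o := Order.succ m)
          ⟨((I.symm ((e.symm (t, ULift.up uc) : ↥E') : omega1.{u}.ToType)) : Ordinal), by
            refine Order.lt_succ_iff.2 (hcon _ ?_)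
            simp⟩
      have hKinj : Function.Injective K := by
        intro t1 t2 h12
        have h13 := (Ordinal.ToType.mk (o := Order.succ m)).injective h12
        have h14 := Subtype.ext_iff.mp h13
        have h15 : I.symm ((e.symm (t1, ULift.up uc) : ↥E') : omega1.{u}.ToType)
            = I.symm ((e.symm (t2, ULift.up uc) : ↥E') : omega1.{u}.ToType) :=
          Subtype.ext h14
        have h16 := Subtype.ext (I.symm.injective h15)
        have h17 := e.symm.injective h16
        exact (Prod.mk.injEq _ _ _ _).mp h17 |>.1
      have h18 : #(omega1.{u}.ToType) ≤ #((Order.succ m).ToType) :=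
        Cardinal.mk_le_of_injective hKinj
      rw [hO, Cardinal.mk_toType] at h18
      have h19 : (Order.succ m).card < Cardinal.aleph 1 := Cardinal.lt_ord.mp hsm
      exact absurd (lt_of_le_of_lt h18 h19) (lt_irrefl _)
    obtain ⟨x, hxu, hxm⟩ := key
    set β : Ordinal.{u} := ((I.symm (x : omega1.{u}.ToType)) : Ordinal) with hβdef
    have hβlt : β < omega1 := (I.symm (x : omega1.{u}.ToType)).2
    have hβE : β ∈ E := x.2
    have hδ0β : Gfil δ0 ≤ Gfil β :=
      hmono δ0 β (le_of_lt (lt_of_le_of_lt (le_max_right γ δ0) hxm)) hβlt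
    refine ⟨β, hβE, lt_of_le_of_lt (le_max_left γ δ0) hxm, ?_, ?_⟩
    · intro a ha
      exact hδ0β (hAG a (Set.mem_union_left _ ha))
    · intro a ha
      have hfg : f β = g x := hford x
      rw [hfg]
      show φ a = decFun ((e x).2).down (Gfil β) a
      rw [hxu]
      refine (decFun_eq uc (Gfil β) a φ (fun n => rfl) ?_).symm
      obtain ⟨n, hn⟩ : ∃ n, aenum n = a := by
        have := hAeq ▸ ha
        exact this
      exact ⟨n, hn, hδ0β (hAG _ (Set.mem_union_right _ (Set.mem_image_of_mem φ (hAeq ▸ Set.mem_range_self n))))⟩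


/-- **Lemma 1.3** (the prediction lemma, assuming CH).  If `G` is an `R`-module of
cardinality `ℵ₁` with an `ℵ₁`-filtration `G = ⋃_{α<ω₁} G_α` and `E ⊆ ω₁` is stationary,
then there is a family of functions `φ_β : G_β → G_β` (β ∈ E) such that any function
`φ : G → G` is predicted on any countable set `A ⊆ G`: there are unboundedly many
`β ∈ E` with `A ⊆ G_β` and `φ ↾ A = φ_β ↾ (G_β ∩ A)`. -/
theorem prediction_lemma
    {R : Type} [CommRing R] [IsDomain R] [IsPrincipalIdealRing R] [Countable R]
    (hRf : ¬ IsField R)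
    (hCH : (2 : Cardinal) ^ Cardinal.aleph0 = Cardinal.aleph 1)
    {G : Type} [AddCommGroup G] [Module R G]
    (hGcard : Cardinal.mk G = Cardinal.aleph 1)
    (Gfil : Ordinal → Submodule R G)
    (hmono : ∀ α β : Ordinal, α ≤ β → β < omega1 → Gfil α ≤ Gfil β)
    (hcount : ∀ α < omega1, (Gfil α : Set G).Countable)
    (hcont : ∀ δ : Ordinal, δ < omega1 → Order.IsSuccLimit δ →
      Gfil δ = ⨆ (α : Ordinal) (_ : α < δ), Gfil α)
    (hunion : (⨆ (α : Ordinal) (_ : α < omega1), Gfil α) = ⊤)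
    (E : Set Ordinal) (hE : IsStationaryInOmega1 E) :
    ∃ f : Ordinal → G → G,
      (∀ β ∈ E, ∀ x ∈ Gfil β, f β x ∈ Gfil β) ∧
      ∀ (φ : G → G) (A : Set G), A.Countable →
        ∀ γ < omega1, ∃ β ∈ E, γ < β ∧ A ⊆ (Gfil β : Set G) ∧
          ∀ a ∈ A, φ a = f β a :=
  main_aux (ch_down hCH) hGcard Gfil hmono hunion E hE
end
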